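/- arXiv:2203.01109 — 2 statements merged into one kernel-verified Lean document; each statement's English description precedes it below -/
import Mathlib

section
/- Let ρ be a d×d complex positive semidefinite matrix with trace 1 and let A_1, …, A_N (N ≥ 2) be d×d Hermitian matrices. Then for each x ∈ {0, 1}: ∑_{i=1}^N I_ρ(A_i) ≥ (1/(2N − 2)) · [ (2/(N(N − 1))) · (∑_{1 ≤ i < j ≤ N} √(I_ρ(A_i + (−1)^x A_j)))² + ∑_{1 ≤ i < j ≤ N} I_ρ(A_i + (−1)^{x+1} A_j) ], where √ denotes the real square root. -/
open Matrix Finset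
open scoped ComplexOrder

/-- The positive semidefinite square root `√ρ`, via the continuous functional calculus. -/
noncomputable def msqrt {d : ℕ} (ρ : Matrix (Fin d) (Fin d) ℂ) :
    Matrix (Fin d) (Fin d) ℂ :=
  cfc (fun t : ℝ => Real.sqrt t) ρ

/-- The Wigner–Yanase skew information `I_ρ(A) = −(1/2) Tr([√ρ, A]²)`. -/
noncomputable def wyObs {d : ℕ} (ρ : Matrix (Fin d) (Fin d) ℂ)
    (A : Matrix (Fin d) (Fin d) ℂ) : ℝ :=
  (-(1 / 2 : ℂ) *
    ((msqrt ρ * A - A * msqrt ρ) * (msqrt ρ * A - A * msqrt ρ)).trace).re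

noncomputable def nsq {d : ℕ} (X : Matrix (Fin d) (Fin d) ℂ) : ℝ :=
  ∑ i, ∑ j, Complex.normSq (X i j)

lemma nsq_nonneg {d : ℕ} (X : Matrix (Fin d) (Fin d) ℂ) : 0 ≤ nsq X :=
  Finset.sum_nonneg fun _ _ => Finset.sum_nonneg fun _ _ => Complex.normSq_nonneg _

lemma nsq_para {d : ℕ} (X Y : Matrix (Fin d) (Fin d) ℂ) :
    nsq (X + Y) + nsq (X - Y) = 2 * nsq X + 2 * nsq Y := by
  simp only [nsq, Finset.mul_sum, ← Finset.sum_add_distrib]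
  refine Finset.sum_congr rfl fun i _ => Finset.sum_congr rfl fun j _ => ?_
  simp only [Matrix.add_apply, Matrix.sub_apply, Complex.normSq_apply, Complex.add_re,
    Complex.add_im, Complex.sub_re, Complex.sub_im]
  ring

lemma msqrt_herm {d : ℕ} (ρ : Matrix (Fin d) (Fin d) ℂ) : (msqrt ρ)ᴴ = msqrt ρ := by
  have : IsSelfAdjoint (msqrt ρ) := IsSelfAdjoint.cfc
  exact this

lemma wy_eq {d : ℕ} {ρ A : Matrix (Fin d) (Fin d) ℂ} (hA : A.IsHermitian) :
    wyObs ρ A = (1/2) * nsq (msqrt ρ * A - A * msqrt ρ) := by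
  set L := msqrt ρ * A - A * msqrt ρ with hL
  have hsk : Lᴴ = -L := by
    simp [hL, Matrix.conjTranspose_sub, Matrix.conjTranspose_mul, hA.eq, msqrt_herm]
  have htr : (L * L).trace = -((nsq L : ℝ) : ℂ) := by
    rw [show L * L = -(Lᴴ * L) by rw [hsk]; simp [Matrix.neg_mul], Matrix.trace_neg]
    congr 1
    simp only [Matrix.trace, Matrix.diag_apply, Matrix.mul_apply, Matrix.conjTranspose_apply,
      nsq]
    push_cast
    rw [Finset.sum_comm]
    refine Finset.sum_congr rfl fun i _ => Finset.sum_congr rfl fun j _ => ?_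
    rw [Complex.star_def, Complex.normSq_eq_conj_mul_self]
  rw [wyObs, ← hL, htr]
  simp [Complex.mul_re]
lemma pair_sum {N : ℕ} (g : Fin N → ℝ) :
    ∑ p ∈ univ.filter (fun p : Fin N × Fin N => p.1 < p.2), (g p.1 + g p.2)
      = ((N : ℝ) - 1) * ∑ i, g i := by
  rw [Finset.sum_filter, Fintype.sum_prod_type]
  have h1 : ∀ i j : Fin N, (if i < j then g i + g j else 0)
      = (if i < j then g i else 0) + (if i < j then g j else 0) := by
    intro i j; split <;> simp
  simp_rw [h1]
  simp only [Finset.sum_add_distrib]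
  have h3 : ∑ i : Fin N, ∑ j : Fin N, (if i < j then g j else 0)
      = ∑ i : Fin N, ∑ j : Fin N, (if j < i then g i else 0) := Finset.sum_comm
  rw [h3, ← Finset.sum_add_distrib]
  have key : ∀ i : Fin N,
      (∑ j : Fin N, (if i < j then g i else 0)) + ∑ j : Fin N, (if j < i then g i else 0)
        = ((N : ℝ) - 1) * g i := by
    intro i
    rw [← Finset.sum_add_distrib]
    have h4 : ∀ j : Fin N, ((if i < j then g i else 0) + (if j < i then g i else 0))
        = g i - (if j = i then g i else 0) := by
      intro j
      rcases lt_trichotomy i j with h | h | h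
      · simp [h, not_lt_of_gt h, (ne_of_gt h)]
      · simp [h.symm, lt_irrefl]
      · simp [h, not_lt_of_gt h, (ne_of_lt h)]
    simp_rw [h4]
    rw [Finset.sum_sub_distrib, Finset.sum_const, Finset.sum_ite_eq' univ i fun _ => g i]
    simp [Finset.card_univ]
    ring
  rw [Finset.sum_congr rfl fun i _ => key i, ← Finset.mul_sum]

lemma core (N : ℕ) (hN : 2 ≤ N) (n : Fin N → ℝ) (P M : Fin N × Fin N → ℝ)
    (hP : ∀ p, 0 ≤ P p) (hM : ∀ p, 0 ≤ M p)
    (hpar : ∀ p : Fin N × Fin N, P p + M p = 2 * n p.1 + 2 * n p.2) :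
    ∑ i, (1/2) * n i ≥
      (1 / (2 * (N : ℝ) - 2)) *
        ((2 / ((N : ℝ) * ((N : ℝ) - 1))) *
            (∑ p ∈ univ.filter (fun p : Fin N × Fin N => p.1 < p.2),
              Real.sqrt ((1/2) * P p)) ^ 2 +
          ∑ p ∈ univ.filter (fun p : Fin N × Fin N => p.1 < p.2), (1/2) * M p) := by
  set S := univ.filter (fun p : Fin N × Fin N => p.1 < p.2) with hS
  have hx : (2 : ℝ) ≤ (N : ℝ) := by exact_mod_cast hN
  have h1 : (0 : ℝ) < (N : ℝ) * ((N : ℝ) - 1) := by nlinarith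
  have h2 : (0 : ℝ) < 2 * (N : ℝ) - 2 := by linarith
  have hcard : (S.card : ℝ) * 2 = (N : ℝ) * ((N : ℝ) - 1) := by
    have h := pair_sum (N := N) (fun _ => (1 : ℝ))
    simp only [Finset.sum_const, nsmul_eq_mul, Finset.card_univ, Fintype.card_fin,
      mul_one] at h
    rw [← hS] at h
    norm_num at h
    linarith
  set q := ∑ p ∈ S, (1/2) * P p with hq
  set r := ∑ p ∈ S, (1/2) * M p with hr
  have hq0 : 0 ≤ q := Finset.sum_nonneg fun p _ => by have := hP p; linarith
  have hQR : q + r = ((N : ℝ) - 1) * ∑ i, n i := by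
    rw [hq, hr, ← Finset.sum_add_distrib]
    rw [Finset.sum_congr rfl (fun p _ => show (1/2) * P p + (1/2) * M p = n p.1 + n p.2 by
      have := hpar p; linarith)]
    exact pair_sum n
  have hCS : (∑ p ∈ S, Real.sqrt ((1/2) * P p)) ^ 2 ≤ (S.card : ℝ) * q := by
    have h := sq_sum_le_card_mul_sum_sq (s := S) (f := fun p => Real.sqrt ((1/2) * P p))
    refine h.trans_eq ?_
    congr 1
    refine Finset.sum_congr rfl fun p _ => ?_
    rw [Real.sq_sqrt]
    have := hP p; linarith
  have key1 : (2 / ((N : ℝ) * ((N : ℝ) - 1))) *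
      (∑ p ∈ S, Real.sqrt ((1/2) * P p)) ^ 2 ≤ q := by
    have h5 : (2 / ((N : ℝ) * ((N : ℝ) - 1))) *
        (∑ p ∈ S, Real.sqrt ((1/2) * P p)) ^ 2
          ≤ (2 / ((N : ℝ) * ((N : ℝ) - 1))) * ((S.card : ℝ) * q) :=
      mul_le_mul_of_nonneg_left hCS (by positivity)
    refine h5.trans_eq ?_
    have hN1 : (N : ℝ) - 1 ≠ 0 := by linarith
    field_simp
    linear_combination q * hcard
  have key2 : (1 / (2 * (N : ℝ) - 2)) *
      ((2 / ((N : ℝ) * ((N : ℝ) - 1))) * (∑ p ∈ S, Real.sqrt ((1/2) * P p)) ^ 2 + r)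
        ≤ (1 / (2 * (N : ℝ) - 2)) * (q + r) :=
    mul_le_mul_of_nonneg_left (by linarith) (by positivity)
  have key3 : (1 / (2 * (N : ℝ) - 2)) * (q + r) = ∑ i, (1/2) * n i := by
    rw [hQR, show (∑ i, (1/2) * n i : ℝ) = (1/2) * ∑ i, n i from (Finset.mul_sum _ _ _).symm]
    have hN1 : (N : ℝ) - 1 ≠ 0 := by linarith
    field_simp
  rw [ge_iff_le]
  exact key2.trans_eq key3

theorem wy_skew_information_uncertainty (d N : ℕ) (hN : 2 ≤ N)
    (ρ : Matrix (Fin d) (Fin d) ℂ) (hρ : ρ.PosSemidef) (hTr : ρ.trace = 1)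
    (A : Fin N → Matrix (Fin d) (Fin d) ℂ) (hA : ∀ i, (A i).IsHermitian) :
    ∀ x ∈ ({0, 1} : Set ℕ),
      ∑ i, wyObs ρ (A i) ≥
        (1 / (2 * (N : ℝ) - 2)) *
          ((2 / ((N : ℝ) * ((N : ℝ) - 1))) *
              (∑ p ∈ univ.filter (fun p : Fin N × Fin N => p.1 < p.2),
                Real.sqrt (wyObs ρ (A p.1 + ((-1 : ℂ) ^ x) • A p.2))) ^ 2 +
            ∑ p ∈ univ.filter (fun p : Fin N × Fin N => p.1 < p.2),
              wyObs ρ (A p.1 + ((-1 : ℂ) ^ (x + 1)) • A p.2)) := by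
  intro x hx
  set w : Fin N → Matrix (Fin d) (Fin d) ℂ :=
    fun i => msqrt ρ * A i - A i * msqrt ρ with hw
  have hw1 : ∀ i, wyObs ρ (A i) = (1/2) * nsq (w i) := fun i => wy_eq (hA i)
  have hadd : ∀ i j, wyObs ρ (A i + A j) = (1/2) * nsq (w i + w j) := by
    intro i j
    rw [wy_eq ((hA i).add (hA j))]
    congr 1
    simp only [hw, Matrix.mul_add, Matrix.add_mul]
    abel
  have hsub : ∀ i j, wyObs ρ (A i + (-1 : ℂ) • A j) = (1/2) * nsq (w i - w j) := by
    intro i j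
    rw [show A i + (-1 : ℂ) • A j = A i - A j by rw [neg_one_smul, ← sub_eq_add_neg]]
    rw [wy_eq ((hA i).sub (hA j))]
    congr 1
    simp only [hw, Matrix.mul_sub, Matrix.sub_mul]
    abel
  have e1 : ∑ i, wyObs ρ (A i) = ∑ i, (1/2) * nsq (w i) :=
    Finset.sum_congr rfl fun i _ => hw1 i
  simp only [Set.mem_insert_iff, Set.mem_singleton_iff] at hx
  rcases hx with hx | hx
  · subst hx
    simp only [pow_zero, one_smul, zero_add, pow_one]
    have e2 : ∑ p ∈ univ.filter (fun p : Fin N × Fin N => p.1 < p.2),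
        Real.sqrt (wyObs ρ (A p.1 + A p.2))
          = ∑ p ∈ univ.filter (fun p : Fin N × Fin N => p.1 < p.2),
            Real.sqrt ((1/2) * nsq (w p.1 + w p.2)) :=
      Finset.sum_congr rfl fun p _ => by rw [hadd]
    have e3 : ∑ p ∈ univ.filter (fun p : Fin N × Fin N => p.1 < p.2),
        wyObs ρ (A p.1 + (-1 : ℂ) • A p.2)
          = ∑ p ∈ univ.filter (fun p : Fin N × Fin N => p.1 < p.2),
            (1/2) * nsq (w p.1 - w p.2) :=
      Finset.sum_congr rfl fun p _ => hsub p.1 p.2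
    rw [e1, e2, e3]
    exact core N hN (fun i => nsq (w i)) (fun p => nsq (w p.1 + w p.2))
      (fun p => nsq (w p.1 - w p.2)) (fun p => nsq_nonneg _) (fun p => nsq_nonneg _)
      (fun p => nsq_para _ _)
  · subst hx
    simp only [pow_one, show ((-1 : ℂ)) ^ (1 + 1) = 1 by norm_num, one_smul]
    have e2 : ∑ p ∈ univ.filter (fun p : Fin N × Fin N => p.1 < p.2),
        Real.sqrt (wyObs ρ (A p.1 + (-1 : ℂ) • A p.2))
          = ∑ p ∈ univ.filter (fun p : Fin N × Fin N => p.1 < p.2),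
            Real.sqrt ((1/2) * nsq (w p.1 - w p.2)) :=
      Finset.sum_congr rfl fun p _ => by rw [hsub]
    have e3 : ∑ p ∈ univ.filter (fun p : Fin N × Fin N => p.1 < p.2),
        wyObs ρ (A p.1 + A p.2)
          = ∑ p ∈ univ.filter (fun p : Fin N × Fin N => p.1 < p.2),
            (1/2) * nsq (w p.1 + w p.2) :=
      Finset.sum_congr rfl fun p _ => hadd p.1 p.2
    rw [e1, e2, e3]
    exact core N hN (fun i => nsq (w i)) (fun p => nsq (w p.1 - w p.2))
      (fun p => nsq (w p.1 + w p.2)) (fun p => nsq_nonneg _) (fun p => nsq_nonneg _)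
      (fun p => by rw [add_comm]; exact nsq_para _ _)
end

section
/- Let ρ be a d×d complex positive semidefinite matrix with trace 1 and let A_1, …, A_N (N ≥ 2) be d×d Hermitian matrices. Then for each x ∈ {0, 1}: ∑_{i=1}^N Δ²_ρ(A_i) ≥ (1/(2N − 2)) · [ (2/(N(N − 1))) · (∑_{1 ≤ i < j ≤ N} Δ_ρ(A_i + (−1)^x A_j))² + ∑_{1 ≤ i < j ≤ N} Δ²_ρ(A_i + (−1)^{x+1} A_j) ]. -/
open Matrix Finset
open scoped ComplexOrder

/-- The variance `Δ²_ρ(A) = Tr(ρ A²) − (Tr(ρ A))²` (a real number). -/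
noncomputable def matVar {d : ℕ} (ρ A : Matrix (Fin d) (Fin d) ℂ) : ℝ :=
  ((ρ * (A * A)).trace - ((ρ * A).trace) ^ 2).re

/-- The standard deviation `Δ_ρ(A) = √(Δ²_ρ(A))`. -/
noncomputable def matDev {d : ℕ} (ρ A : Matrix (Fin d) (Fin d) ℂ) : ℝ :=
  Real.sqrt (matVar ρ A)

lemma aux_trace_re_nonneg {d : ℕ} {M : Matrix (Fin d) (Fin d) ℂ} (hM : M.PosSemidef) :
    0 ≤ M.trace.re := by
  have h : ∀ i, 0 ≤ M i i := fun i => by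
    exact hM.diag_nonneg
  have h2 : 0 ≤ M.trace := by
    rw [Matrix.trace]
    exact Finset.sum_nonneg fun i _ => h i
  simpa using (Complex.le_def.mp h2).1

lemma aux_var_nonneg {d : ℕ} {ρ B : Matrix (Fin d) (Fin d) ℂ} (hρ : ρ.PosSemidef)
    (hTr : ρ.trace = 1) (hB : B.IsHermitian) : 0 ≤ matVar ρ B := by
  set m : ℂ := (ρ * B).trace with hm
  have hms : star m = m := by
    rw [hm, ← Matrix.trace_conjTranspose, Matrix.conjTranspose_mul, hB.eq, hρ.isHermitian.eq,
      Matrix.trace_mul_comm]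
  set C : Matrix (Fin d) (Fin d) ℂ := B - m • 1 with hC
  have hCH : Cᴴ = C := by
    rw [hC, Matrix.conjTranspose_sub, hB.eq, Matrix.conjTranspose_smul, Matrix.conjTranspose_one,
      hms]
  have hPSD : (C * ρ * Cᴴ).PosSemidef := hρ.mul_mul_conjTranspose_same C
  have key : (C * ρ * Cᴴ).trace = (ρ * (B * B)).trace - m ^ 2 := by
    rw [hCH, Matrix.trace_mul_cycle, Matrix.trace_mul_comm, hC]
    simp only [Matrix.mul_sub, Matrix.sub_mul, Matrix.smul_mul, Matrix.mul_smul, Matrix.mul_one,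
      Matrix.one_mul, Matrix.trace_sub, Matrix.trace_smul, smul_eq_mul, hTr, ← hm,
      Matrix.trace_one]
    ring
  have heq : matVar ρ B = (C * ρ * Cᴴ).trace.re := by rw [key]; rfl
  rw [heq]
  exact aux_trace_re_nonneg hPSD

lemma aux_parallelogram {d : ℕ} (ρ X Y : Matrix (Fin d) (Fin d) ℂ) :
    matVar ρ (X + Y) + matVar ρ (X - Y) = 2 * matVar ρ X + 2 * matVar ρ Y := by
  have key : ((ρ * ((X + Y) * (X + Y))).trace - ((ρ * (X + Y)).trace) ^ 2) +
      ((ρ * ((X - Y) * (X - Y))).trace - ((ρ * (X - Y)).trace) ^ 2) =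
      2 * ((ρ * (X * X)).trace - ((ρ * X).trace) ^ 2) +
      2 * ((ρ * (Y * Y)).trace - ((ρ * Y).trace) ^ 2) := by
    simp only [Matrix.mul_add, Matrix.add_mul, Matrix.mul_sub, Matrix.sub_mul,
      Matrix.trace_add, Matrix.trace_sub]
    ring
  have := congrArg Complex.re key
  simpa [matVar, Complex.add_re, Complex.mul_re] using this

lemma aux_var_smul {d : ℕ} (ρ Y : Matrix (Fin d) (Fin d) ℂ) {s : ℂ} (hs : s ^ 2 = 1) :
    matVar ρ (s • Y) = matVar ρ Y := by
  unfold matVar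
  have h1 : ρ * (s • Y * (s • Y)) = s ^ 2 • (ρ * (Y * Y)) := by
    simp [Matrix.smul_mul, Matrix.mul_smul, smul_smul, sq]
  have h2 : ρ * (s • Y) = s • (ρ * Y) := by simp [Matrix.mul_smul]
  rw [h1, h2, hs]
  simp [mul_pow, hs]

lemma aux_swap_sum {N : ℕ} (g : Fin N × Fin N → ℝ) :
    ∑ p ∈ univ.filter (fun p : Fin N × Fin N => p.1 < p.2), g p.swap =
    ∑ p ∈ univ.filter (fun p : Fin N × Fin N => p.2 < p.1), g p := by
  apply Finset.sum_nbij' (fun p => p.swap) (fun p => p.swap) <;>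
    simp [Finset.mem_filter]

lemma aux_filter_split {N : ℕ} :
    (univ.filter (fun p : Fin N × Fin N => p.1 ≠ p.2)) =
      (univ.filter (fun p : Fin N × Fin N => p.1 < p.2)) ∪
      (univ.filter (fun p : Fin N × Fin N => p.2 < p.1)) := by
  rw [← Finset.filter_or]
  apply Finset.filter_congr
  intro p _
  exact ne_iff_lt_or_gt

lemma aux_disj {N : ℕ} :
    Disjoint (univ.filter (fun p : Fin N × Fin N => p.1 < p.2))
      (univ.filter (fun p : Fin N × Fin N => p.2 < p.1)) := by
  rw [Finset.disjoint_left]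
  intro p hp hq
  simp only [Finset.mem_filter] at hp hq
  exact absurd hq.2 (not_lt.mpr hp.2.le)

lemma aux_ne_sum {N : ℕ} (f : Fin N → ℝ) :
    ∑ p ∈ univ.filter (fun p : Fin N × Fin N => p.1 ≠ p.2), f p.1 =
      ((N : ℝ) - 1) * ∑ i, f i := by
  rw [Finset.sum_filter, Fintype.sum_prod_type]
  have h : ∀ i : Fin N, (∑ j, if i ≠ j then f i else 0) = ((N : ℝ) - 1) * f i := by
    intro i
    rw [Finset.sum_ite, Finset.sum_const, Finset.sum_const, smul_zero, add_zero,
      Finset.filter_ne, Finset.card_erase_of_mem (Finset.mem_univ i), Finset.card_univ,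
      Fintype.card_fin, nsmul_eq_mul]
    have hN1 : 1 ≤ N := i.pos
    push_cast [Nat.cast_sub hN1]
    ring
  simp_rw [h]
  rw [← Finset.mul_sum]

lemma aux_pair_sum {N : ℕ} (f : Fin N → ℝ) :
    ∑ p ∈ univ.filter (fun p : Fin N × Fin N => p.1 < p.2), (f p.1 + f p.2) =
      ((N : ℝ) - 1) * ∑ i, f i := by
  rw [Finset.sum_add_distrib]
  have h2 : ∑ p ∈ univ.filter (fun p : Fin N × Fin N => p.1 < p.2), f p.2 =
      ∑ p ∈ univ.filter (fun p : Fin N × Fin N => p.2 < p.1), f p.1 := by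
    have := aux_swap_sum (N := N) (fun p => f p.1)
    simpa using this
  rw [h2, ← Finset.sum_union aux_disj, ← aux_filter_split, aux_ne_sum]

lemma aux_card_pairs {N : ℕ} (hN : 1 ≤ N) :
    ((univ.filter (fun p : Fin N × Fin N => p.1 < p.2)).card : ℝ) = N * (N - 1) / 2 := by
  have hcards : (univ.filter (fun p : Fin N × Fin N => p.1 < p.2)).card =
      (univ.filter (fun p : Fin N × Fin N => p.2 < p.1)).card := by
    apply Finset.card_nbij (fun p => p.swap)
    · intro p hp; simpa using hp
    · simp [Set.InjOn]
    · intro p hp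
      simp only [Finset.coe_filter, Set.mem_setOf_eq, Set.mem_image] at hp ⊢
      exact ⟨p.swap, ⟨Finset.mem_univ _, hp.2⟩, Prod.swap_swap p⟩
  have hsum := Finset.card_union_of_disjoint (aux_disj (N := N))
  rw [← aux_filter_split] at hsum
  have hoff : (univ.filter (fun p : Fin N × Fin N => p.1 ≠ p.2)) =
      (univ : Finset (Fin N)).offDiag := by
    ext p
    simp [Finset.mem_offDiag]
  rw [hoff, Finset.offDiag_card, Finset.card_univ, Fintype.card_fin] at hsum
  have h2 : 2 * (univ.filter (fun p : Fin N × Fin N => p.1 < p.2)).card = N * N - N := by omega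
  have := congrArg (fun n : ℕ => (n : ℝ)) h2
  push_cast [Nat.cast_sub (Nat.le_mul_of_pos_left N hN)] at this
  linarith

lemma aux_core (d N : ℕ) (hN : 2 ≤ N)
    (ρ : Matrix (Fin d) (Fin d) ℂ) (hρ : ρ.PosSemidef) (hTr : ρ.trace = 1)
    (A : Fin N → Matrix (Fin d) (Fin d) ℂ) (hA : ∀ i, (A i).IsHermitian)
    (s : ℂ) (hs : s = 1 ∨ s = -1) :
    ∑ i, matVar ρ (A i) ≥
      (1 / (2 * (N : ℝ) - 2)) *
        ((2 / ((N : ℝ) * ((N : ℝ) - 1))) *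
            (∑ p ∈ univ.filter (fun p : Fin N × Fin N => p.1 < p.2),
              matDev ρ (A p.1 + s • A p.2)) ^ 2 +
          ∑ p ∈ univ.filter (fun p : Fin N × Fin N => p.1 < p.2),
            matVar ρ (A p.1 + (-s) • A p.2)) := by
  have hs2 : s ^ 2 = 1 := by rcases hs with h | h <;> subst h <;> norm_num
  have hss : star s = s := by rcases hs with h | h <;> subst h <;> simp
  have herm : ∀ (t : ℂ), star t = t → ∀ i j : Fin N, (A i + t • A j).IsHermitian := by
    intro t ht i j
    unfold Matrix.IsHermitian
    rw [Matrix.conjTranspose_add, Matrix.conjTranspose_smul, ht, (hA i).eq, (hA j).eq]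
  have hssn : star (-s) = -s := by rw [star_neg, hss]
  set P := univ.filter (fun p : Fin N × Fin N => p.1 < p.2) with hP
  set Qp := ∑ p ∈ P, matVar ρ (A p.1 + s • A p.2) with hQp
  set Qm := ∑ p ∈ P, matVar ρ (A p.1 + (-s) • A p.2) with hQm
  set S := ∑ p ∈ P, matDev ρ (A p.1 + s • A p.2) with hS
  set V := ∑ i, matVar ρ (A i) with hV
  have n2 : (2 : ℝ) ≤ (N : ℝ) := by exact_mod_cast hN
  -- parallelogram sum
  have hpar : Qp + Qm = (2 * (N : ℝ) - 2) * V := by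
    have hp : ∀ p : Fin N × Fin N,
        matVar ρ (A p.1 + s • A p.2) + matVar ρ (A p.1 + (-s) • A p.2) =
        2 * matVar ρ (A p.1) + 2 * matVar ρ (A p.2) := by
      intro p
      have h1 : A p.1 + (-s) • A p.2 = A p.1 - s • A p.2 := by
        rw [neg_smul, sub_eq_add_neg]
      rw [h1, aux_parallelogram ρ (A p.1) (s • A p.2), aux_var_smul ρ (A p.2) hs2]
    have : Qp + Qm = ∑ p ∈ P, (2 * matVar ρ (A p.1) + 2 * matVar ρ (A p.2)) := by
      rw [hQp, hQm, ← Finset.sum_add_distrib]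
      exact Finset.sum_congr rfl fun p _ => hp p
    rw [this]
    have : ∑ p ∈ P, (2 * matVar ρ (A p.1) + 2 * matVar ρ (A p.2)) =
        2 * ∑ p ∈ P, (matVar ρ (A p.1) + matVar ρ (A p.2)) := by
      rw [Finset.mul_sum]; exact Finset.sum_congr rfl fun p _ => by ring
    rw [this, hP, aux_pair_sum (fun i => matVar ρ (A i)), ← hV]
    ring
  -- Cauchy-Schwarz
  have hCS : S ^ 2 ≤ ((N : ℝ) * ((N : ℝ) - 1) / 2) * Qp := by
    have h1 : S ^ 2 ≤ (P.card : ℝ) * ∑ p ∈ P, (matDev ρ (A p.1 + s • A p.2)) ^ 2 :=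
      sq_sum_le_card_mul_sum_sq
    have h2 : ∑ p ∈ P, (matDev ρ (A p.1 + s • A p.2)) ^ 2 = Qp := by
      rw [hQp]
      refine Finset.sum_congr rfl fun p _ => ?_
      exact Real.sq_sqrt (aux_var_nonneg hρ hTr (herm s hss p.1 p.2))
    rw [h2, aux_card_pairs (show 1 ≤ N by omega)] at h1
    exact h1
  have hQpn : 0 ≤ Qp :=
    Finset.sum_nonneg fun p _ => aux_var_nonneg hρ hTr (herm s hss p.1 p.2)
  have hQmn : 0 ≤ Qm :=
    Finset.sum_nonneg fun p _ => aux_var_nonneg hρ hTr (herm (-s) hssn p.1 p.2)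
  have hpos1 : (0 : ℝ) < (N : ℝ) * ((N : ℝ) - 1) := by nlinarith
  have hpos2 : (0 : ℝ) < 2 * (N : ℝ) - 2 := by linarith
  have h5 : (2 / ((N : ℝ) * ((N : ℝ) - 1))) * S ^ 2 ≤ Qp := by
    rw [div_mul_eq_mul_div, div_le_iff₀ hpos1]
    nlinarith
  have h6 : (2 / ((N : ℝ) * ((N : ℝ) - 1))) * S ^ 2 + Qm ≤ (2 * (N : ℝ) - 2) * V := by
    linarith
  calc (1 / (2 * (N : ℝ) - 2)) * ((2 / ((N : ℝ) * ((N : ℝ) - 1))) * S ^ 2 + Qm)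
      ≤ (1 / (2 * (N : ℝ) - 2)) * ((2 * (N : ℝ) - 2) * V) :=
        mul_le_mul_of_nonneg_left h6 (by positivity)
    _ = V := by field_simp; exact mul_div_cancel_left₀ V (by linarith : (N : ℝ) - 1 ≠ 0)

theorem variance_uncertainty (d N : ℕ) (hN : 2 ≤ N)
    (ρ : Matrix (Fin d) (Fin d) ℂ) (hρ : ρ.PosSemidef) (hTr : ρ.trace = 1)
    (A : Fin N → Matrix (Fin d) (Fin d) ℂ) (hA : ∀ i, (A i).IsHermitian) :
    ∀ x ∈ ({0, 1} : Set ℕ),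
      ∑ i, matVar ρ (A i) ≥
        (1 / (2 * (N : ℝ) - 2)) *
          ((2 / ((N : ℝ) * ((N : ℝ) - 1))) *
              (∑ p ∈ univ.filter (fun p : Fin N × Fin N => p.1 < p.2),
                matDev ρ (A p.1 + ((-1 : ℂ) ^ x) • A p.2)) ^ 2 +
            ∑ p ∈ univ.filter (fun p : Fin N × Fin N => p.1 < p.2),
              matVar ρ (A p.1 + ((-1 : ℂ) ^ (x + 1)) • A p.2)) := by
  intro x hx
  rcases hx with h | h
  · subst h
    have := aux_core d N hN ρ hρ hTr A hA 1 (Or.inl rfl)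
    simpa using this
  · simp only [Set.mem_singleton_iff] at h
    subst h
    have := aux_core d N hN ρ hρ hTr A hA (-1) (Or.inr rfl)
    simpa using this
end
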